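/- (Vanishing of the F_X-component on nonzero generalized eigenspaces, assertion (c) in the proof of Theorem 1.) Let U ⊆ ℂ² be open containing 0, X a holomorphic vector field on U, and x̃ a first integral of X, i.e. a holomorphic function with X(x̃) = 0 on U and dx̃(0) ≠ (0,0). Let β be a closed holomorphic 1-form on U with β ∧ dx̃ = 0 identically, and suppose that for some λ ∈ ℂ with λ ≠ 0 and some integer σ ≥ 1 one has β^{(σ)} = 0 near 0, where β^{(0)} := β and β^{(m+1)} := L_X β^{(m)} − λ·β^{(m)}. Then β = 0 on a neighborhood of 0. -/

import Mathlib

open Complex Filter Topology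

noncomputable section

/-- A point of the complex plane `ℂ²`. -/
abbrev Pt : Type := ℂ × ℂ

/-- A (holomorphic) 1-form `A dx + B dy` on (an open subset of) `ℂ²`,
identified with the pair of functions `(A, B)`. -/
abbrev Form1 : Type := (Pt → ℂ) × (Pt → ℂ)

/-- The complex partial derivative `∂f/∂x`. -/
noncomputable def pdx (f : Pt → ℂ) (p : Pt) : ℂ := fderiv ℂ f p (1, 0)

/-- The complex partial derivative `∂f/∂y`. -/
noncomputable def pdy (f : Pt → ℂ) (p : Pt) : ℂ := fderiv ℂ f p (0, 1)

/-- The derivative `X(f) = P ∂f/∂x + Q ∂f/∂y` of `f` along the vector field `X = (P, Q)`. -/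
noncomputable def Xf (P Q f : Pt → ℂ) (p : Pt) : ℂ := P p * pdx f p + Q p * pdy f p

/-- The contraction `i_X ω = A·P + B·Q` of the 1-form `ω = (A,B)` with `X = (P,Q)`. -/
noncomputable def contr (P Q : Pt → ℂ) (ω : Form1) (p : Pt) : ℂ := ω.1 p * P p + ω.2 p * Q p

/-- The wedge `ω ∧ ω' = A·B' − B·A'` of two 1-forms, as a function. -/
noncomputable def wedge (ω ω' : Form1) (p : Pt) : ℂ := ω.1 p * ω'.2 p - ω.2 p * ω'.1 p

/-- The differential `df = (∂f/∂x, ∂f/∂y)` of a function. -/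
noncomputable def fd (f : Pt → ℂ) : Form1 := (pdx f, pdy f)

/-- A 1-form `(A,B)` is closed on `U` if `∂A/∂y = ∂B/∂x` on `U`. -/
def IsClosedOn (ω : Form1) (U : Set Pt) : Prop := ∀ p ∈ U, pdy ω.1 p = pdx ω.2 p

/-- The Lie derivative `L_X ω` of the 1-form `ω = (A,B)` with respect to `X = (P,Q)`:
`L_X ω = (X(A) + A ∂P/∂x + B ∂Q/∂x, X(B) + A ∂P/∂y + B ∂Q/∂y)`. -/
noncomputable def lie (P Q : Pt → ℂ) (ω : Form1) : Form1 :=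
  (fun p => Xf P Q ω.1 p + ω.1 p * pdx P p + ω.2 p * pdx Q p,
   fun p => Xf P Q ω.2 p + ω.1 p * pdy P p + ω.2 p * pdy Q p)

/-- A 1-form is holomorphic on `U` if both its components are. -/
def AnalyticForm (ω : Form1) (U : Set Pt) : Prop :=
  AnalyticOnNhd ℂ ω.1 U ∧ AnalyticOnNhd ℂ ω.2 U


section Aux

variable {f g : Pt → ℂ} {p : Pt}

lemma pdx_congr (h : f =ᶠ[𝓝 p] g) : pdx f p = pdx g p := by
  unfold pdx; rw [h.fderiv_eq]

lemma pdy_congr (h : f =ᶠ[𝓝 p] g) : pdy f p = pdy g p := by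
  unfold pdy; rw [h.fderiv_eq]

lemma pdx_const_mul (hf : DifferentiableAt ℂ f p) (c : ℂ) :
    pdx (fun q => c * f q) p = c * pdx f p := by
  unfold pdx; rw [fderiv_const_mul hf]; simp

lemma pdy_const_mul (hf : DifferentiableAt ℂ f p) (c : ℂ) :
    pdy (fun q => c * f q) p = c * pdy f p := by
  unfold pdy; rw [fderiv_const_mul hf]; simp

lemma pdx_add (hf : DifferentiableAt ℂ f p) (hg : DifferentiableAt ℂ g p) :
    pdx (fun q => f q + g q) p = pdx f p + pdx g p := by
  unfold pdx; rw [fderiv_fun_add hf hg]; simp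

lemma pdy_add (hf : DifferentiableAt ℂ f p) (hg : DifferentiableAt ℂ g p) :
    pdy (fun q => f q + g q) p = pdy f p + pdy g p := by
  unfold pdy; rw [fderiv_fun_add hf hg]; simp

lemma pdx_mul (hf : DifferentiableAt ℂ f p) (hg : DifferentiableAt ℂ g p) :
    pdx (fun q => f q * g q) p = f p * pdx g p + g p * pdx f p := by
  unfold pdx; rw [fderiv_fun_mul hf hg]; simp

lemma pdy_mul (hf : DifferentiableAt ℂ f p) (hg : DifferentiableAt ℂ g p) :
    pdy (fun q => f q * g q) p = f p * pdy g p + g p * pdy f p := by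
  unfold pdy; rw [fderiv_fun_mul hf hg]; simp

lemma pdx_zero_of_eventually (h : f =ᶠ[𝓝 p] (fun _ => (0 : ℂ))) : pdx f p = 0 := by
  rw [pdx_congr h]; simp [pdx]

lemma pdy_zero_of_eventually (h : f =ᶠ[𝓝 p] (fun _ => (0 : ℂ))) : pdy f p = 0 := by
  rw [pdy_congr h]; simp [pdy]

end Aux

/-- **assertion (c) in the proof of Theorem 1.** Let `x̃` be a first
integral of `X = (P,Q)` on an open `U ∋ 0` (`X(x̃) = 0`, `dx̃(0) ≠ (0,0)`), and `β` a
closed holomorphic 1-form on `U` with `β ∧ dx̃ = 0`. If `(L_X − λ)^σ β = 0` near `0` for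
some `λ ≠ 0` and `σ ≥ 1`, then `β = 0` near `0`. -/
theorem stmt_15 (U : Set Pt) (hUopen : IsOpen U) (h0U : (0 : Pt) ∈ U) (P Q xt : Pt → ℂ)
    (hP : AnalyticOnNhd ℂ P U) (hQ : AnalyticOnNhd ℂ Q U) (hxt : AnalyticOnNhd ℂ xt U)
    (hXxt : ∀ p ∈ U, Xf P Q xt p = 0) (hdxt0 : (pdx xt 0, pdy xt 0) ≠ (0, 0))
    (β : Form1) (hβ : AnalyticForm β U) (hclosed : IsClosedOn β U)
    (hwedge : ∀ p ∈ U, wedge β (fd xt) p = 0)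
    (l : ℂ) (hl : l ≠ 0) (σ : ℕ) (hσ : 1 ≤ σ)
    (T : Form1 → Form1)
    (hT : T = fun η : Form1 => (fun p => (lie P Q η).1 p - l * η.1 p,
                                fun p => (lie P Q η).2 p - l * η.2 p))
    (hnil : ∃ V ∈ 𝓝 (0 : Pt), ∀ p ∈ V, (T^[σ] β).1 p = 0 ∧ (T^[σ] β).2 p = 0) :
    ∃ V ∈ 𝓝 (0 : Pt), ∀ p ∈ V, β.1 p = 0 ∧ β.2 p = 0 := by
  obtain ⟨V₀, hV₀, hV₀z⟩ := hnil
  have hdβ1 : ∀ p ∈ U, DifferentiableAt ℂ β.1 p := fun p hp => (hβ.1 p hp).differentiableAt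
  have hdβ2 : ∀ p ∈ U, DifferentiableAt ℂ β.2 p := fun p hp => (hβ.2 p hp).differentiableAt
  have hdP : ∀ p ∈ U, DifferentiableAt ℂ P p := fun p hp => (hP p hp).differentiableAt
  have hdQ : ∀ p ∈ U, DifferentiableAt ℂ Q p := fun p hp => (hQ p hp).differentiableAt
  -- the open set where dx̃ ≠ 0
  set G : Pt → ℂ × ℂ := fun p => (pdx xt p, pdy xt p) with hGdef
  have hGc : ContinuousOn G U := by
    have h1 : ContinuousOn (fderiv ℂ xt) U := (hxt.fderiv).continuousOn
    exact (h1.clm_apply continuousOn_const).prodMk (h1.clm_apply continuousOn_const)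
  set W : Set Pt := U ∩ G ⁻¹' ({((0 : ℂ), (0 : ℂ))}ᶜ) with hWdef
  have hWopen : IsOpen W := hGc.isOpen_inter_preimage hUopen isOpen_compl_singleton
  have h0W : (0 : Pt) ∈ W := ⟨h0U, by simpa [hGdef] using hdxt0⟩
  -- contraction i_X β vanishes on W
  have hcontr : ∀ p ∈ W, contr P Q β p = 0 := by
    rintro p ⟨hpU, hpG⟩
    have hwe := hwedge p hpU
    have hX := hXxt p hpU
    simp only [wedge, fd, Xf] at hwe hX
    have hne : pdx xt p ≠ 0 ∨ pdy xt p ≠ 0 := by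
      by_contra h
      push_neg at h
      exact hpG (by simp [hGdef, h.1, h.2])
    rcases hne with h | h
    · have hz : contr P Q β p * pdx xt p = 0 := by
        simp only [contr]; linear_combination (β.1 p) * hX - (Q p) * hwe
      exact (mul_eq_zero.mp hz).resolve_right h
    · have hz : contr P Q β p * pdy xt p = 0 := by
        simp only [contr]; linear_combination (β.2 p) * hX + (P p) * hwe
      exact (mul_eq_zero.mp hz).resolve_right h
  -- Cartan: L_X β = d(i_X β) = 0 on W
  have hlie0 : ∀ p ∈ W, (lie P Q β).1 p = 0 ∧ (lie P Q β).2 p = 0 := by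
    intro p hpW
    have hpU := hpW.1
    have hev : contr P Q β =ᶠ[𝓝 p] (fun _ => (0 : ℂ)) :=
      eventually_of_mem (hWopen.mem_nhds hpW) hcontr
    have hceq : contr P Q β = fun q => β.1 q * P q + β.2 q * Q q := rfl
    have hx0 : pdx (fun q => β.1 q * P q + β.2 q * Q q) p = 0 := by
      rw [← hceq]; exact pdx_zero_of_eventually hev
    have hy0 : pdy (fun q => β.1 q * P q + β.2 q * Q q) p = 0 := by
      rw [← hceq]; exact pdy_zero_of_eventually hev
    have hcl := hclosed p hpU
    rw [pdx_add (f := fun q => β.1 q * P q) (g := fun q => β.2 q * Q q) ((hdβ1 p hpU).mul (hdP p hpU)) ((hdβ2 p hpU).mul (hdQ p hpU)),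
        pdx_mul (hdβ1 p hpU) (hdP p hpU), pdx_mul (hdβ2 p hpU) (hdQ p hpU)] at hx0
    rw [pdy_add (f := fun q => β.1 q * P q) (g := fun q => β.2 q * Q q) ((hdβ1 p hpU).mul (hdP p hpU)) ((hdβ2 p hpU).mul (hdQ p hpU)),
        pdy_mul (hdβ1 p hpU) (hdP p hpU), pdy_mul (hdβ2 p hpU) (hdQ p hpU)] at hy0
    constructor
    · simp only [lie, Xf]
      linear_combination hx0 + Q p * hcl
    · simp only [lie, Xf]
      linear_combination hy0 - P p * hcl
  -- iterates of T act as multiplication by (-l)^n on β, on W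
  have key : ∀ n : ℕ, ∀ p ∈ W, (T^[n] β).1 p = (-l) ^ n * β.1 p ∧
      (T^[n] β).2 p = (-l) ^ n * β.2 p := by
    intro n
    induction n with
    | zero => intro p _; simp
    | succ n ih =>
      intro p hpW
      have hpU := hpW.1
      rw [Function.iterate_succ_apply']
      set η := T^[n] β with hη
      have hev1 : η.1 =ᶠ[𝓝 p] (fun q => (-l) ^ n * β.1 q) :=
        eventually_of_mem (hWopen.mem_nhds hpW) (fun q hq => (ih q hq).1)
      have hev2 : η.2 =ᶠ[𝓝 p] (fun q => (-l) ^ n * β.2 q) :=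
        eventually_of_mem (hWopen.mem_nhds hpW) (fun q hq => (ih q hq).2)
      have e1 : pdx η.1 p = (-l) ^ n * pdx β.1 p := by
        rw [pdx_congr hev1, pdx_const_mul (hdβ1 p hpU)]
      have e2 : pdy η.1 p = (-l) ^ n * pdy β.1 p := by
        rw [pdy_congr hev1, pdy_const_mul (hdβ1 p hpU)]
      have e3 : pdx η.2 p = (-l) ^ n * pdx β.2 p := by
        rw [pdx_congr hev2, pdx_const_mul (hdβ2 p hpU)]
      have e4 : pdy η.2 p = (-l) ^ n * pdy β.2 p := by
        rw [pdy_congr hev2, pdy_const_mul (hdβ2 p hpU)]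
      have v1 : η.1 p = (-l) ^ n * β.1 p := (ih p hpW).1
      have v2 : η.2 p = (-l) ^ n * β.2 p := (ih p hpW).2
      have hl1 := (hlie0 p hpW).1
      have hl2 := (hlie0 p hpW).2
      simp only [lie, Xf] at hl1 hl2
      subst hT
      constructor
      · simp only [lie, Xf]
        rw [e1, e2, v1, v2]
        linear_combination ((-l) ^ n) * hl1
      · simp only [lie, Xf]
        rw [e3, e4, v1, v2]
        linear_combination ((-l) ^ n) * hl2
  -- conclude
  refine ⟨W ∩ interior V₀, Filter.inter_mem (hWopen.mem_nhds h0W)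
    (interior_mem_nhds.mpr hV₀), ?_⟩
  rintro p ⟨hpW, hpV⟩
  have h1 := hV₀z p (interior_subset hpV)
  have h2 := key σ p hpW
  have hpow : (-l) ^ σ ≠ 0 := pow_ne_zero _ (neg_ne_zero.mpr hl)
  constructor
  · have h3 : (-l) ^ σ * β.1 p = 0 := by rw [← h2.1, h1.1]
    exact (mul_eq_zero.mp h3).resolve_left hpow
  · have h3 : (-l) ^ σ * β.2 p = 0 := by rw [← h2.2, h1.2]
    exact (mul_eq_zero.mp h3).resolve_left hpow
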